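/- Let A be an n×d real matrix of full column rank, let W be an n×k matrix with orthonormal columns, and let Z be a d×k matrix with orthonormal columns whose column span equals the column span of A^T W. Then for all i ∈ [k], σ_i(AZ) ≥ σ_i(A^T W), where σ_i denotes the i-th largest singular value. -/

import Mathlib

open Matrix BigOperators

/-- The (unsorted) singular values of a real matrix: square roots of the
eigenvalues of `Aᴴ * A`. -/
noncomputable def svU {n d : ℕ} (A : Matrix (Fin n) (Fin d) ℝ) : Fin d → ℝ :=
  fun j => Real.sqrt ((Matrix.isHermitian_conjTranspose_mul_self A).eigenvalues j)

/-- `sv A i` is the `i`-th largest singular value of `A` (0-indexed). -/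
noncomputable def sv {n d : ℕ} (A : Matrix (Fin n) (Fin d) ℝ) (i : Fin d) : ℝ :=
  svU A (Tuple.sort (svU A) i.rev)

/-- `schattenPow p A = ‖A‖_{S_p}^p = ∑ i, σ_i(A)^p`. -/
noncomputable def schattenPow {n d : ℕ} (p : ℝ) (A : Matrix (Fin n) (Fin d) ℝ) : ℝ :=
  ∑ i, sv A i ^ p

/-- The Schatten-`p` norm `‖A‖_{S_p} = (∑ i, σ_i(A)^p)^(1/p)`. -/
noncomputable def schatten {n d : ℕ} (p : ℝ) (A : Matrix (Fin n) (Fin d) ℝ) : ℝ :=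
  (schattenPow p A) ^ (1 / p)

/-- Euclidean norm of a vector. -/
noncomputable def eNorm {n : ℕ} (v : Fin n → ℝ) : ℝ := Real.sqrt (∑ i, v i ^ 2)

/-- Frobenius norm of a matrix. -/
noncomputable def frob {n d : ℕ} (A : Matrix (Fin n) (Fin d) ℝ) : ℝ :=
  Real.sqrt (∑ i, ∑ j, A i j ^ 2)

/-- Operator (spectral) norm: the largest singular value. -/
noncomputable def opNorm {n d : ℕ} (A : Matrix (Fin n) (Fin d) ℝ) : ℝ := ⨆ i, sv A i

section Aux
open Finset
variable {k : ℕ}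

lemma dotmv {a b : ℕ} (N : Matrix (Fin a) (Fin b) ℝ) (x : Fin a → ℝ) (y : Fin b → ℝ) :
    x ⬝ᵥ N *ᵥ y = (Nᵀ *ᵥ x) ⬝ᵥ y := by
  rw [Matrix.dotProduct_mulVec, Matrix.mulVec_transpose]

noncomputable def evU (M : Matrix (Fin k) (Fin k) ℝ) (hM : M.IsHermitian) :
    Matrix (Fin k) (Fin k) ℝ := hM.eigenvectorUnitary

variable (M : Matrix (Fin k) (Fin k) ℝ) (hM : M.IsHermitian)

lemma star_evU : star (evU M hM) = (evU M hM)ᵀ := by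
  ext i j; simp [Matrix.star_apply]

lemma evU_tmul : (evU M hM)ᵀ * evU M hM = 1 := by
  rw [← star_evU]; exact Unitary.star_mul_self_of_mem hM.eigenvectorUnitary.2

lemma evU_mult : evU M hM * (evU M hM)ᵀ = 1 := by
  rw [← star_evU]; exact Unitary.mul_star_self_of_mem hM.eigenvectorUnitary.2

lemma spec : M = evU M hM * Matrix.diagonal hM.eigenvalues * (evU M hM)ᵀ := by
  rw [← star_evU]; convert hM.spectral_theorem using 3
  rw [Unitary.conjStarAlgAut_apply]; rfl

lemma tmulM : (evU M hM)ᵀ * M = Matrix.diagonal hM.eigenvalues * (evU M hM)ᵀ := by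
  calc (evU M hM)ᵀ * M
      = (evU M hM)ᵀ * (evU M hM * Matrix.diagonal hM.eigenvalues * (evU M hM)ᵀ) := by
        rw [← spec M hM]
    _ = ((evU M hM)ᵀ * evU M hM) * Matrix.diagonal hM.eigenvalues * (evU M hM)ᵀ := by
        rw [Matrix.mul_assoc, Matrix.mul_assoc, Matrix.mul_assoc]
    _ = Matrix.diagonal hM.eigenvalues * (evU M hM)ᵀ := by rw [evU_tmul]; simp

lemma coordMv (x : Fin k → ℝ) :
    (evU M hM)ᵀ *ᵥ (M *ᵥ x) = fun j => hM.eigenvalues j * ((evU M hM)ᵀ *ᵥ x) j := by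
  rw [Matrix.mulVec_mulVec, tmulM M hM, ← Matrix.mulVec_mulVec]
  funext j
  simp [Matrix.mulVec_diagonal]

lemma dot_pair (x y : Fin k → ℝ) :
    x ⬝ᵥ y = ((evU M hM)ᵀ *ᵥ x) ⬝ᵥ ((evU M hM)ᵀ *ᵥ y) := by
  have h1 : x ⬝ᵥ y = x ⬝ᵥ (evU M hM * (evU M hM)ᵀ) *ᵥ y := by rw [evU_mult]; simp
  rw [h1, ← Matrix.mulVec_mulVec, dotmv]

lemma normsq (x : Fin k → ℝ) : x ⬝ᵥ x = ∑ j, ((evU M hM)ᵀ *ᵥ x) j ^ 2 := by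
  rw [dot_pair M hM x x]
  simp [dotProduct, sq]

lemma quad (x : Fin k → ℝ) :
    x ⬝ᵥ M *ᵥ x = ∑ j, hM.eigenvalues j * ((evU M hM)ᵀ *ᵥ x) j ^ 2 := by
  rw [dot_pair M hM x (M *ᵥ x), coordMv M hM x]
  simp only [dotProduct]
  exact Finset.sum_congr rfl fun j _ => by ring

lemma coord_inj (x : Fin k → ℝ) (h : (evU M hM)ᵀ *ᵥ x = 0) : x = 0 := by
  have : evU M hM *ᵥ ((evU M hM)ᵀ *ᵥ x) = x := by
    rw [Matrix.mulVec_mulVec, evU_mult, Matrix.one_mulVec]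
  rw [h, Matrix.mulVec_zero] at this
  exact this.symm

noncomputable def ucol (j : Fin k) : Fin k → ℝ := fun i => evU M hM i j

lemma ucol_eq (j : Fin k) : ucol M hM j = evU M hM *ᵥ Pi.single j 1 := by
  funext i; simp [ucol, Matrix.mulVec_single]

lemma coord_ucol (j : Fin k) : (evU M hM)ᵀ *ᵥ ucol M hM j = Pi.single j 1 := by
  rw [ucol_eq, Matrix.mulVec_mulVec, evU_tmul, Matrix.one_mulVec]

lemma li_ucol : LinearIndependent ℝ (ucol M hM) := by
  rw [Fintype.linearIndependent_iff]
  intro g hg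
  have hsum : ∑ j, g j • ucol M hM j = evU M hM *ᵥ g := by
    funext i
    simp [ucol, Matrix.mulVec, dotProduct, Finset.sum_apply, mul_comm]
  rw [hsum] at hg
  intro i
  have : (evU M hM)ᵀ *ᵥ (evU M hM *ᵥ g) = g := by
    rw [Matrix.mulVec_mulVec, evU_tmul, Matrix.one_mulVec]
  rw [hg, Matrix.mulVec_zero] at this
  exact congrFun this.symm i

lemma span_coord_zero (S : Finset (Fin k)) (x : Fin k → ℝ)
    (hx : x ∈ Submodule.span ℝ (Set.range fun j : ↥S => ucol M hM ↑j)) :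
    ∀ j ∉ S, ((evU M hM)ᵀ *ᵥ x) j = 0 := by
  induction hx using Submodule.span_induction with
  | mem y hy =>
    obtain ⟨j', rfl⟩ := hy
    intro j hj
    rw [coord_ucol]
    refine Pi.single_eq_of_ne (fun h => hj ?_) 1
    exact h ▸ j'.2
  | zero => intro j _; simp
  | add y z _ _ hy hz =>
    intro j hj
    rw [Matrix.mulVec_add]
    simp [hy j hj, hz j hj]
  | smul a y _ hy =>
    intro j hj
    rw [Matrix.mulVec_smul]
    simp [hy j hj]

lemma finrank_le_count (t : ℝ) (V : Submodule ℝ (Fin k → ℝ))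
    (hV : ∀ x ∈ V, t * (x ⬝ᵥ x) ≤ x ⬝ᵥ M *ᵥ x) :
    Module.finrank ℝ V ≤ (univ.filter fun j => t ≤ hM.eigenvalues j).card := by
  by_contra hlt
  push_neg at hlt
  set S : Finset (Fin k) := univ.filter (fun j => ¬ t ≤ hM.eigenvalues j) with hS
  set T : Submodule ℝ (Fin k → ℝ) :=
    Submodule.span ℝ (Set.range fun j : ↥S => ucol M hM ↑j) with hT
  have hTrank : Module.finrank ℝ T = S.card := by
    rw [hT, show (Set.range fun j : ↥S => ucol M hM ↑j) = Set.range (ucol M hM ∘ Subtype.val) from rfl,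
      finrank_span_eq_card ((li_ucol M hM).comp _ Subtype.val_injective),
      Fintype.card_coe]
  have hcards : (univ.filter fun j => t ≤ hM.eigenvalues j).card + S.card = k := by
    rw [hS, Finset.card_filter_add_card_filter_not, Finset.card_univ, Fintype.card_fin]
  have h1 := Submodule.finrank_sup_add_finrank_inf_eq V T
  have h2 : Module.finrank ℝ ↥(V ⊔ T) ≤ k := by
    have := Submodule.finrank_le (V ⊔ T)
    simpa [Module.finrank_fin_fun] using this
  have hpos : 0 < Module.finrank ℝ ↥(V ⊓ T) := by omega
  obtain ⟨x, hxVT, hx0⟩ : ∃ x ∈ V ⊓ T, x ≠ 0 := by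
    rw [← Submodule.ne_bot_iff]
    intro h
    rw [h] at hpos
    simp [finrank_bot] at hpos
  set c := (evU M hM)ᵀ *ᵥ x with hc
  have hcS : ∀ j, t ≤ hM.eigenvalues j → c j = 0 := fun j hj =>
    span_coord_zero M hM S x hxVT.2 j (by simp [hS, hj])
  have hc0 : c ≠ 0 := fun h => hx0 (coord_inj M hM x h)
  obtain ⟨j0, hj0⟩ : ∃ j, c j ≠ 0 := Function.ne_iff.mp hc0
  have hj0S : ¬ t ≤ hM.eigenvalues j0 := fun h => hj0 (hcS j0 h)
  have hlt2 : x ⬝ᵥ M *ᵥ x < t * (x ⬝ᵥ x) := by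
    rw [quad M hM, normsq M hM, Finset.mul_sum]
    apply Finset.sum_lt_sum
    · intro j _
      by_cases h : t ≤ hM.eigenvalues j
      · rw [show ((evU M hM)ᵀ *ᵥ x) j = c j from rfl, hcS j h]; simp
      · exact mul_le_mul_of_nonneg_right (not_le.mp h).le (sq_nonneg _)
    · refine ⟨j0, Finset.mem_univ _, ?_⟩
      have h1 : hM.eigenvalues j0 < t := not_le.mp hj0S
      have h2 : 0 < c j0 ^ 2 := by positivity
      exact mul_lt_mul_of_pos_right h1 h2
  exact absurd (hV x hxVT.1) (not_le.mpr hlt2)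

lemma psd_eig_nonneg (E : Matrix (Fin k) (Fin k) ℝ) (j : Fin k) :
    0 ≤ (Matrix.isHermitian_conjTranspose_mul_self E).eigenvalues j := by
  have hC : Eᴴ = Eᵀ := by ext i j; simp [Matrix.conjTranspose_apply]
  have h := Matrix.posSemidef_conjTranspose_mul_self E
  rw [hC] at h
  exact h.eigenvalues_nonneg j

lemma count_le_count (E G : Matrix (Fin k) (Fin k) ℝ) (hG : G.IsHermitian)
    (hPSD : ∀ x : Fin k → ℝ, 0 ≤ x ⬝ᵥ (G - E * Eᵀ) *ᵥ x) (t : ℝ) (ht : 0 < t) :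
    (univ.filter fun j => t ≤ (Matrix.isHermitian_conjTranspose_mul_self E).eigenvalues j).card ≤
    (univ.filter fun j => t ≤ hG.eigenvalues j).card := by
  set M := Eᵀ * E with hMdef
  set hM := Matrix.isHermitian_conjTranspose_mul_self E with hMh
  set J : Finset (Fin k) := univ.filter fun j => t ≤ hM.eigenvalues j with hJ
  set f : ↥J → (Fin k → ℝ) := fun j => E *ᵥ ucol M hM ↑j with hf
  have key : ∀ u : Fin k → ℝ, (E *ᵥ u) ⬝ᵥ (E *ᵥ u) = u ⬝ᵥ M *ᵥ u := by
    intro u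
    rw [hMdef, ← Matrix.mulVec_mulVec, dotmv Eᵀ u, Matrix.transpose_transpose]
  have hMpsd : ∀ j, 0 ≤ hM.eigenvalues j := psd_eig_nonneg E
  -- linear independence of f
  have hfli : LinearIndependent ℝ f := by
    rw [Fintype.linearIndependent_iff]
    intro g hg
    set u := ∑ j : ↥J, g j • ucol M hM ↑j with hu
    have hEu : E *ᵥ u = 0 := by
      have h2 : E.mulVecLin u = ∑ j : ↥J, g j • E.mulVecLin (ucol M hM ↑j) := by
        rw [hu, map_sum]
        exact Finset.sum_congr rfl fun j _ => map_smul _ _ _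
      have h1 : E *ᵥ u = ∑ j : ↥J, g j • f j := by
        simpa only [Matrix.mulVecLin_apply, hf] using h2
      rw [h1, hg]
    have hquad : u ⬝ᵥ M *ᵥ u = 0 := by rw [← key, hEu]; simp
    rw [quad M hM] at hquad
    have hcord : ∀ j' : ↥J, ((evU M hM)ᵀ *ᵥ u) ↑j' = g j' := by
      intro j'
      have : (evU M hM)ᵀ.mulVecLin u = ∑ j : ↥J, g j • (Pi.single j.val 1 : Fin k → ℝ) := by
        rw [hu, map_sum]
        refine Finset.sum_congr rfl fun j _ => ?_
        rw [LinearMap.map_smul]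
        congr 1
        rw [Matrix.mulVecLin_apply]
        exact coord_ucol M hM _
      have h2 := congrFun this ↑j'
      simp only [Matrix.mulVecLin_apply] at h2
      rw [h2, Finset.sum_apply]
      rw [Finset.sum_eq_single j']
      · simp
      · intro b _ hb
        have : (↑b : Fin k) ≠ ↑j' := fun h => hb (Subtype.ext h)
        simp only [Pi.smul_apply, smul_eq_mul]
        rw [Pi.single_eq_of_ne this.symm, mul_zero]
      · intro h; exact absurd (Finset.mem_univ j') h
    have hzero : ∀ j ∈ (univ : Finset (Fin k)),
        hM.eigenvalues j * ((evU M hM)ᵀ *ᵥ u) j ^ 2 = 0 := by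
      rw [← Finset.sum_eq_zero_iff_of_nonneg]
      · exact hquad
      · intro j _
        have := hMpsd j
        positivity
    intro j'
    have hj'm : (↑j' : Fin k) ∈ J := j'.2
    have ht' : t ≤ hM.eigenvalues ↑j' := (Finset.mem_filter.mp hj'm).2
    have := hzero ↑j' (Finset.mem_univ _)
    rw [hcord j'] at this
    rcases mul_eq_zero.mp this with h | h
    · exact absurd h (by nlinarith)
    · exact pow_eq_zero_iff (by norm_num) |>.mp h
  -- the subspace
  set T : Submodule ℝ (Fin k → ℝ) :=
    Submodule.span ℝ (Set.range fun j : ↥J => ucol M hM ↑j) with hT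
  set V : Submodule ℝ (Fin k → ℝ) := Submodule.map E.mulVecLin T with hV
  have hVspan : V = Submodule.span ℝ (Set.range f) := by
    rw [hV, hT, Submodule.map_span, ← Set.range_comp]
    rfl
  have hVrank : Module.finrank ℝ V = J.card := by
    rw [hVspan, finrank_span_eq_card hfli, Fintype.card_coe]
  have hVquad : ∀ x ∈ V, t * (x ⬝ᵥ x) ≤ x ⬝ᵥ G *ᵥ x := by
    intro x hx
    obtain ⟨u, huT, rfl⟩ := Submodule.mem_map.mp hx
    simp only [Matrix.mulVecLin_apply]
    set x := E *ᵥ u with hx'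
    have ha : x ⬝ᵥ x = u ⬝ᵥ M *ᵥ u := key u
    have hb : x ⬝ᵥ (E * Eᵀ) *ᵥ x ≤ x ⬝ᵥ G *ᵥ x := by
      have := hPSD x
      rw [Matrix.sub_mulVec, dotProduct_sub] at this
      linarith
    have hEx : Eᵀ *ᵥ x = M *ᵥ u := by
      rw [hx', Matrix.mulVec_mulVec, ← hMdef]
    have hc : x ⬝ᵥ (E * Eᵀ) *ᵥ x = (M *ᵥ u) ⬝ᵥ (M *ᵥ u) := by
      rw [← Matrix.mulVec_mulVec, dotmv E x, hEx]
    have hd : (M *ᵥ u) ⬝ᵥ (M *ᵥ u) =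
        ∑ j, (hM.eigenvalues j * ((evU M hM)ᵀ *ᵥ u) j) ^ 2 := by
      rw [normsq M hM]
      exact Finset.sum_congr rfl fun j _ => by rw [coordMv M hM]; rfl
    have he : u ⬝ᵥ M *ᵥ u = ∑ j, hM.eigenvalues j * ((evU M hM)ᵀ *ᵥ u) j ^ 2 :=
      quad M hM u
    have hf2 : t * (u ⬝ᵥ M *ᵥ u) ≤ (M *ᵥ u) ⬝ᵥ (M *ᵥ u) := by
      rw [hd, he, Finset.mul_sum]
      apply Finset.sum_le_sum
      intro j _
      by_cases hjJ : (j : Fin k) ∈ J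
      · have htj : t ≤ hM.eigenvalues j := (Finset.mem_filter.mp hjJ).2
        have := hMpsd j
        nlinarith [sq_nonneg (((evU M hM)ᵀ *ᵥ u) j)]
      · have : ((evU M hM)ᵀ *ᵥ u) j = 0 := span_coord_zero M hM J u huT j hjJ
        rw [this]
        simp
    calc t * (x ⬝ᵥ x) = t * (u ⬝ᵥ M *ᵥ u) := by rw [ha]
      _ ≤ (M *ᵥ u) ⬝ᵥ (M *ᵥ u) := hf2
      _ = x ⬝ᵥ (E * Eᵀ) *ᵥ x := hc.symm
      _ ≤ x ⬝ᵥ G *ᵥ x := hb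
  have := finrank_le_count G hG t V hVquad
  rw [hVrank] at this
  exact this

lemma perm_filter_card {d : ℕ} (f : Fin d → ℝ) (p : ℝ → Prop) [DecidablePred p] :
    (univ.filter fun j => p (f (Tuple.sort f j))).card = (univ.filter fun j => p (f j)).card := by
  rw [Finset.card_filter, Finset.card_filter]
  exact Equiv.sum_comp (Tuple.sort f) (fun j => if p (f j) then 1 else 0)

lemma count_ge_sv {d : ℕ} (f : Fin d → ℝ) (i : Fin d) :
    (i : ℕ) + 1 ≤ (univ.filter fun j => f (Tuple.sort f i.rev) ≤ f j).card := by
  rw [← perm_filter_card f (fun r => f (Tuple.sort f i.rev) ≤ r)]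
  have hsub : Finset.Ici i.rev ⊆
      univ.filter fun j => f (Tuple.sort f i.rev) ≤ f (Tuple.sort f j) := by
    intro j hj
    simp only [Finset.mem_filter, Finset.mem_univ, true_and]
    exact Tuple.monotone_sort f (Finset.mem_Ici.mp hj)
  have hcard := Finset.card_le_card hsub
  rw [Fin.card_Ici] at hcard
  have hrev : (i.rev : ℕ) = d - ((i : ℕ) + 1) := Fin.val_rev i
  have hi := i.isLt
  omega

lemma sv_ge_of_count {d : ℕ} (f : Fin d → ℝ) (i : Fin d) (s : ℝ)
    (h : (i : ℕ) + 1 ≤ (univ.filter fun j => s ≤ f j).card) :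
    s ≤ f (Tuple.sort f i.rev) := by
  by_contra hlt
  push_neg at hlt
  rw [← perm_filter_card f (fun r => s ≤ r)] at h
  have hsub : (univ.filter fun j => s ≤ f (Tuple.sort f j)) ⊆ Finset.Ioi i.rev := by
    intro j hj
    rw [Finset.mem_Ioi]
    by_contra hle
    push_neg at hle
    have hmon := Tuple.monotone_sort f hle
    have hs := (Finset.mem_filter.mp hj).2
    simp only [Function.comp_apply] at hmon
    linarith
  have hcard := Finset.card_le_card hsub
  rw [Fin.card_Ioi] at hcard
  have hrev : (i.rev : ℕ) = d - ((i : ℕ) + 1) := Fin.val_rev i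
  have hi := i.isLt
  omega

lemma eig_congr {k : ℕ} {M N : Matrix (Fin k) (Fin k) ℝ} (h : M = N)
    (hM : M.IsHermitian) (hN : N.IsHermitian) : hM.eigenvalues = hN.eigenvalues := by
  subst h; rfl

end Aux

open Finset in
/-- If `A` has full column rank, `W` has orthonormal columns and `Z` is an
orthonormal basis for the column span of `AᵀW`, then `σ_i(AZ) ≥ σ_i(AᵀW)`. -/
theorem stmt12 {n d k : ℕ} (A : Matrix (Fin n) (Fin d) ℝ) (hA : A.rank = d)
    (W : Matrix (Fin n) (Fin k) ℝ) (hW : Wᵀ * W = 1)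
    (Z : Matrix (Fin d) (Fin k) ℝ) (hZ : Zᵀ * Z = 1)
    (hspan : LinearMap.range Z.mulVecLin = LinearMap.range (Aᵀ * W).mulVecLin) :
    ∀ i : Fin k, sv (Aᵀ * W) i ≤ sv (A * Z) i := by
  intro i
  have hAZnn : (0:ℝ) ≤ sv (A * Z) i := Real.sqrt_nonneg _
  rcases le_or_gt (sv (Aᵀ * W) i) 0 with hs | hs
  · linarith
  · have hcol : ∀ v : Fin k → ℝ, (Z * (Zᵀ * (Aᵀ * W))) *ᵥ v = (Aᵀ * W) *ᵥ v := by
      intro v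
      obtain ⟨y, hy⟩ : (Aᵀ * W) *ᵥ v ∈ LinearMap.range Z.mulVecLin := by
        rw [hspan]; exact ⟨v, rfl⟩
      have hy' : Z *ᵥ y = (Aᵀ * W) *ᵥ v := hy
      rw [← Matrix.mulVec_mulVec, ← Matrix.mulVec_mulVec, ← hy',
        Matrix.mulVec_mulVec, Matrix.mulVec_mulVec, Matrix.mul_assoc, hZ, Matrix.mul_one]
    have hfact : Z * (Zᵀ * (Aᵀ * W)) = Aᵀ * W := by
      ext a b
      have h := congrFun (hcol (Pi.single b 1)) a
      simpa [Matrix.mulVec_single] using h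
    have hconj : ∀ {a b : ℕ} (N : Matrix (Fin a) (Fin b) ℝ), Nᴴ = Nᵀ := by
      intro a b N; ext i j; simp [Matrix.conjTranspose_apply]
    set E := Zᵀ * (Aᵀ * W) with hE
    have hgram : (Aᵀ * W)ᴴ * (Aᵀ * W) = Eᴴ * E := by
      rw [hconj, hconj, ← hfact, Matrix.transpose_mul, Matrix.mul_assoc,
        ← Matrix.mul_assoc Zᵀ Z E, hZ, Matrix.one_mul]
    have heig : (Matrix.isHermitian_conjTranspose_mul_self (Aᵀ * W)).eigenvalues
        = (Matrix.isHermitian_conjTranspose_mul_self E).eigenvalues :=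
      eig_congr hgram _ _
    set s := sv (Aᵀ * W) i with hsdef
    have h1 : (i : ℕ) + 1 ≤ (univ.filter fun j => s ≤ svU (Aᵀ * W) j).card :=
      count_ge_sv (svU (Aᵀ * W)) i
    have h1' : (i : ℕ) + 1 ≤ (univ.filter fun j =>
        s ^ 2 ≤ (Matrix.isHermitian_conjTranspose_mul_self E).eigenvalues j).card := by
      refine le_trans h1 (le_of_eq ?_)
      congr 1
      apply Finset.filter_congr
      intro j _
      have hsq : svU (Aᵀ * W) j
          = Real.sqrt ((Matrix.isHermitian_conjTranspose_mul_self E).eigenvalues j) := by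
        unfold svU
        rw [heig]
      rw [hsq, Real.le_sqrt' hs]
    have hWW : ∀ {m : ℕ} (Y : Matrix (Fin n) (Fin m) ℝ),
        Wᵀ * (W * (Wᵀ * Y)) = Wᵀ * Y := by
      intro m Y; rw [← Matrix.mul_assoc, ← Matrix.mul_assoc, hW, Matrix.one_mul]
    have hPSD : ∀ x : Fin k → ℝ,
        0 ≤ x ⬝ᵥ ((A*Z)ᴴ*(A*Z) - E * Eᵀ) *ᵥ x := by
      intro x
      have hQ : (A*Z)ᴴ*(A*Z) - E * Eᵀ
          = ((A*Z) - W*(Wᵀ*(A*Z)))ᴴ * ((A*Z) - W*(Wᵀ*(A*Z))) := by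
        rw [hconj, hconj, hE]
        simp only [Matrix.transpose_sub, Matrix.sub_mul, Matrix.mul_sub, Matrix.transpose_mul,
          Matrix.transpose_transpose, Matrix.mul_assoc]
        rw [hWW]
        abel
      rw [hQ]
      have h := (Matrix.posSemidef_conjTranspose_mul_self ((A*Z) - W*(Wᵀ*(A*Z)))).dotProduct_mulVec_nonneg x
      have hstar : star x = x := funext fun i => star_trivial _
      rw [hstar] at h
      exact h
    have h2 := count_le_count E ((A*Z)ᴴ*(A*Z))
      (Matrix.isHermitian_conjTranspose_mul_self (A*Z)) hPSD (s^2) (by positivity)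
    have h3 : (i:ℕ)+1 ≤ (univ.filter fun j => s ≤ svU (A*Z) j).card := by
      refine le_trans (le_trans h1' h2) (le_of_eq ?_)
      congr 1
      apply Finset.filter_congr
      intro j _
      have hsq : svU (A*Z) j
          = Real.sqrt ((Matrix.isHermitian_conjTranspose_mul_self (A*Z)).eigenvalues j) := rfl
      rw [hsq, Real.le_sqrt' hs]
    exact sv_ge_of_count (svU (A*Z)) i s h3
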